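/- Let n ≥ 1, let Q_{i,j} : ℤ → [0,∞) (1 ≤ i < j ≤ n) be log-concave sequences, and let w_1, …, w_n : ℕ → [0,∞) be ultra-log-concave sequences (extended by 0 to negative integers). Assume the discrete ensemble P_{n,w,Q} is well defined. Then for every i ∈ {1, …, n}, the probability mass function k ↦ P_{n,w,Q}(h_i = k) is an ultra-log-concave sequence on ℕ. -/

import Mathlib

open scoped BigOperators
open Filter Topology

noncomputable section

/-- Unnormalized weight of a configuration `h` in the discrete ensemble `P_{n,w,Q}`:
`∏_{i<j} Q_{i,j}(h_j - h_i) · ∏_j w_j(h_j)`. -/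
def ensembleWeight (n : ℕ) (w : Fin n → ℤ → ℝ) (Q : Fin n → Fin n → ℤ → ℝ)
    (h : Fin n → ℤ) : ℝ :=
  (∏ i : Fin n, ∏ j : Fin n, if i < j then Q i j (h j - h i) else 1) *
    ∏ j : Fin n, w j (h j)

/-- `P_{n,w,Q}(h_i = k)`: the probability, under the discrete ensemble on strictly
increasing integer tuples, that the `i`-th coordinate equals `k`. -/
def ensembleProb (n : ℕ) (w : Fin n → ℤ → ℝ) (Q : Fin n → Fin n → ℤ → ℝ)
    (i : Fin n) (k : ℤ) : ℝ :=
  (∑' h : {h : Fin n → ℤ // StrictMono h ∧ h i = k}, ensembleWeight n w Q h.1) /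
    ∑' h : {h : Fin n → ℤ // StrictMono h}, ensembleWeight n w Q h.1



/-- step lemma: a s * a t ≤ a (s+1) * a (t-1) under positivity on [s,t] -/
lemma lc_step (a : ℤ → ℝ) (h0 : ∀ k, 0 ≤ a k)
    (hlc : ∀ k : ℤ, a (k - 1) * a (k + 1) ≤ a k ^ 2)
    (s t : ℤ) (hst : s + 2 ≤ t)
    (hpos : ∀ x, s ≤ x → x ≤ t → 0 < a x) :
    a s * a t ≤ a (s + 1) * a (t - 1) := by
  have key : ∀ (d : ℕ) (t : ℤ), t = s + 2 + d → (∀ x, s ≤ x → x ≤ t → 0 < a x) →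
      a s * a t ≤ a (s + 1) * a (t - 1) := by
    intro d
    induction d with
    | zero =>
      intro t htd hpos
      have : t = s + 2 := by omega
      subst this
      have h := hlc (s + 1)
      have e1 : s + 1 - 1 = s := by ring
      have e2 : s + 1 + 1 = s + 2 := by ring
      rw [e1, e2] at h
      have e3 : s + 2 - 1 = s + 1 := by ring
      rw [e3]
      nlinarith [h]
    | succ d ih =>
      intro t htd hpos
      have hpos' : ∀ x, s ≤ x → x ≤ t - 1 → 0 < a x := fun x hx hx' =>
        hpos x hx (by omega)
      have ih' := ih (t - 1) (by omega) hpos'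
      have hlct := hlc (t - 1)
      have hat : 0 < a (t - 1) := hpos (t - 1) (by omega) (by omega)
      have e1 : t - 1 - 1 = t - 2 := by ring
      have e2 : t - 1 + 1 = t := by ring
      rw [e1, e2] at hlct
      have e3 : t - 1 - 1 = t - 2 := by ring
      rw [e3] at ih'
      have key2 : a s * a t * a (t - 1) ≤ a (s + 1) * a (t - 1) * a (t - 1) := by
        calc a s * a t * a (t - 1) = (a s * a (t - 1)) * a t := by ring
          _ ≤ (a (s + 1) * a (t - 2)) * a t := by
              apply mul_le_mul_of_nonneg_right ih' (h0 _)
          _ = a (s + 1) * (a (t - 2) * a t) := by ring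
          _ ≤ a (s + 1) * a (t - 1) ^ 2 := by
              apply mul_le_mul_of_nonneg_left hlct (h0 _)
          _ = a (s + 1) * a (t - 1) * a (t - 1) := by ring
      exact (mul_le_mul_iff_of_pos_right hat).mp key2
  exact key (t - s - 2).toNat t (by omega) hpos

/-- interval log-concavity -/
lemma lc_interval (a : ℤ → ℝ) (h0 : ∀ k, 0 ≤ a k)
    (hlc : ∀ k : ℤ, a (k - 1) * a (k + 1) ≤ a k ^ 2)
    (hsupp : ∀ s u t : ℤ, s ≤ u → u ≤ t → 0 < a s → 0 < a t → 0 < a u) :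
    ∀ (s t u v : ℤ), s ≤ u → u ≤ t → s + t = u + v → a s * a t ≤ a u * a v := by
  have main : ∀ (d : ℕ) (s t u v : ℤ), s ≤ u → u ≤ t → s + t = u + v → u = s + d →
      (∀ x, s ≤ x → x ≤ t → 0 < a x) → a s * a t ≤ a u * a v := by
    intro d
    induction d with
    | zero =>
      intro s t u v h1 h2 h3 h4 hpos
      have : u = s := by omega
      subst this
      have : v = t := by omega
      subst this
      exact le_refl _
    | succ d ih =>
      intro s t u v h1 h2 h3 h4 hpos
      rcases eq_or_lt_of_le h2 with rfl | hut
      · have hv : v = s := by omega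
        subst hv
        rw [mul_comm]
      · -- s + 1 ≤ u ≤ t - 1
        have hs1u : s + 1 ≤ u := by omega
        have hut1 : u ≤ t - 1 := by omega
        have hstep : a s * a t ≤ a (s + 1) * a (t - 1) :=
          lc_step a h0 hlc s t (by omega) hpos
        have hpos' : ∀ x, s + 1 ≤ x → x ≤ t - 1 → 0 < a x := fun x hx hx' =>
          hpos x (by omega) (by omega)
        have := ih (s + 1) (t - 1) u v hs1u hut1 (by omega) (by omega) hpos'
        linarith
  intro s t u v h1 h2 h3
  rcases eq_or_lt_of_le (h0 s) with hs | hs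
  · rw [← hs]
    simpa using mul_nonneg (h0 u) (h0 v)
  rcases eq_or_lt_of_le (h0 t) with ht | ht
  · rw [← ht]
    simpa using mul_nonneg (h0 u) (h0 v)
  have hpos : ∀ x, s ≤ x → x ≤ t → 0 < a x := fun x hx hx' => hsupp s x t hx hx' hs ht
  exact main (u - s).toNat s t u v h1 h2 h3 (by omega) hpos



/-- one-step log-concavity over ℤ for an ULC weight extended by zero -/
lemma w_lc_int (w : ℤ → ℝ) (h0 : ∀ k, 0 ≤ w k) (hneg : ∀ k : ℤ, k < 0 → w k = 0)
    (hulc : ∀ k : ℕ, ((Nat.factorial k : ℝ) * w (k : ℤ)) *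
        ((Nat.factorial (k + 2) : ℝ) * w ((k : ℤ) + 2)) ≤
      ((Nat.factorial (k + 1) : ℝ) * w ((k : ℤ) + 1)) ^ 2) :
    ∀ k : ℤ, w (k - 1) * w (k + 1) ≤ w k ^ 2 := by
  intro k
  rcases lt_or_ge (k - 1) 0 with hk | hk
  · rw [hneg _ hk, zero_mul]
    positivity
  · obtain ⟨m, hm⟩ : ∃ m : ℕ, k - 1 = (m : ℤ) := ⟨(k - 1).toNat, by omega⟩
    have e1 : k = (m : ℤ) + 1 := by omega
    have e2 : k + 1 = (m : ℤ) + 2 := by omega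
    rw [hm, e1, show ((m : ℤ) + 1 + 1) = (m : ℤ) + 2 from by ring]
    -- now goal : w ↑m * w (↑m + 2) ≤ w (↑m + 1) ^ 2
    have hnat : ((m + 1).factorial) ^ 2 ≤ m.factorial * (m + 2).factorial := by
      have h1 : (m + 1).factorial = (m + 1) * m.factorial := Nat.factorial_succ m
      have h2 : (m + 2).factorial = (m + 2) * (m + 1).factorial := Nat.factorial_succ (m + 1)
      rw [h2, h1]
      have h3 : (m + 1) * (m + 1) ≤ (m + 2) * (m + 1) := Nat.mul_le_mul_right _ (by omega)
      nlinarith [h3]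
    have hBA : (((m + 1).factorial : ℝ)) ^ 2 ≤ (m.factorial : ℝ) * ((m + 2).factorial : ℝ) := by
      exact_mod_cast hnat
    have hA : (0 : ℝ) < (m.factorial : ℝ) * ((m + 2).factorial : ℝ) := by positivity
    have h1 := hulc m
    have h2 : (w (m : ℤ) * w ((m : ℤ) + 2)) * ((m.factorial : ℝ) * ((m + 2).factorial : ℝ)) ≤
        (w ((m : ℤ) + 1) ^ 2) * (((m + 1).factorial : ℝ)) ^ 2 := by nlinarith [h1]
    have h3 : (w ((m : ℤ) + 1) ^ 2) * (((m + 1).factorial : ℝ)) ^ 2 ≤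
        (w ((m : ℤ) + 1) ^ 2) * ((m.factorial : ℝ) * ((m + 2).factorial : ℝ)) :=
      mul_le_mul_of_nonneg_left hBA (by positivity)
    exact le_of_mul_le_mul_right (h2.trans h3) hA

/-- interval support over ℤ -/
lemma w_supp_int (w : ℤ → ℝ) (hneg : ∀ k : ℤ, k < 0 → w k = 0)
    (hsupp : ∀ k₁ k₂ k₃ : ℕ, k₁ ≤ k₂ → k₂ ≤ k₃ →
      0 < w (k₁ : ℤ) → 0 < w (k₃ : ℤ) → 0 < w (k₂ : ℤ)) :
    ∀ s u t : ℤ, s ≤ u → u ≤ t → 0 < w s → 0 < w t → 0 < w u := by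
  intro s u t hsu hut hs ht
  have hs0 : 0 ≤ s := by
    by_contra hc
    rw [hneg s (by omega)] at hs
    exact lt_irrefl _ hs
  have ht0 : 0 ≤ t := by omega
  have hu0 : 0 ≤ u := by omega
  obtain ⟨s', rfl⟩ : ∃ s' : ℕ, s = (s' : ℤ) := ⟨s.toNat, by omega⟩
  obtain ⟨u', rfl⟩ : ∃ u' : ℕ, u = (u' : ℤ) := ⟨u.toNat, by omega⟩
  obtain ⟨t', rfl⟩ : ∃ t' : ℕ, t = (t' : ℤ) := ⟨t.toNat, by omega⟩
  exact hsupp s' u' t' (by exact_mod_cast hsu) (by exact_mod_cast hut) hs ht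

lemma ensembleWeight_nonneg (n : ℕ) (w : Fin n → ℤ → ℝ) (Q : Fin n → Fin n → ℤ → ℝ)
    (hw0 : ∀ j k, 0 ≤ w j k) (hQ0 : ∀ i j : Fin n, i < j → ∀ k, 0 ≤ Q i j k)
    (h : Fin n → ℤ) : 0 ≤ ensembleWeight n w Q h := by
  unfold ensembleWeight
  apply mul_nonneg
  · apply Finset.prod_nonneg
    intro i _
    apply Finset.prod_nonneg
    intro j _
    by_cases hij : i < j
    · simp only [hij, if_true]
      exact hQ0 i j hij _
    · simp [hij]
  · exact Finset.prod_nonneg fun j _ => hw0 j _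

lemma weight_rearrange (n : ℕ) (v : Fin n → ℤ → ℝ) (Q : Fin n → Fin n → ℤ → ℝ)
    (hv0 : ∀ j k, 0 ≤ v j k)
    (hQ0 : ∀ i j : Fin n, i < j → ∀ k, 0 ≤ Q i j k)
    (hvI : ∀ j : Fin n, ∀ s t u x : ℤ, s ≤ u → u ≤ t → s + t = u + x →
      v j s * v j t ≤ v j u * v j x)
    (hQI : ∀ i j : Fin n, i < j → ∀ s t u x : ℤ, s ≤ u → u ≤ t → s + t = u + x →
      Q i j s * Q i j t ≤ Q i j u * Q i j x)
    (p q : Fin n → ℤ) (α : ℤ) (hα : 0 ≤ α) :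
    ensembleWeight n v Q p * ensembleWeight n v Q q ≤
      ensembleWeight n v Q (fun a => max (p a - α) (q a)) *
        ensembleWeight n v Q (fun a => min (p a) (q a + α)) := by
  set u : Fin n → ℤ := fun a => max (p a - α) (q a) with hu
  set x : Fin n → ℤ := fun a => min (p a) (q a + α) with hx
  -- core scalar facts
  have hsum : ∀ a, u a + x a = p a + q a := fun a => by simp only [hu, hx]; omega
  have hbetween : ∀ a, min (p a) (q a) ≤ u a ∧ u a ≤ max (p a) (q a) := fun a => by
    simp only [hu]; omega
  -- generic two-point inequality from interval property
  have core : ∀ (f : ℤ → ℝ), (∀ k, 0 ≤ f k) →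
      (∀ s t u' x' : ℤ, s ≤ u' → u' ≤ t → s + t = u' + x' → f s * f t ≤ f u' * f x') →
      ∀ (dp dq du dx : ℤ), du + dx = dp + dq → min dp dq ≤ du → du ≤ max dp dq →
      f dp * f dq ≤ f du * f dx := by
    intro f _ hI dp dq du dx hs h1 h2
    rcases le_total dp dq with h | h
    · have := hI (min dp dq) (max dp dq) du dx h1 h2 (by omega)
      rwa [min_eq_left h, max_eq_right h] at this
    · have := hI (min dp dq) (max dp dq) du dx h1 h2 (by omega)
      rw [min_eq_right h, max_eq_left h] at this
      rwa [mul_comm (f dp) (f dq)]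
  unfold ensembleWeight
  have hQpart : (∏ i : Fin n, ∏ j : Fin n, if i < j then Q i j (p j - p i) else 1) *
      (∏ i : Fin n, ∏ j : Fin n, if i < j then Q i j (q j - q i) else 1) ≤
      (∏ i : Fin n, ∏ j : Fin n, if i < j then Q i j (u j - u i) else 1) *
      (∏ i : Fin n, ∏ j : Fin n, if i < j then Q i j (x j - x i) else 1) := by
    rw [← Finset.prod_mul_distrib, ← Finset.prod_mul_distrib]
    apply Finset.prod_le_prod
    · intro i _
      apply mul_nonneg <;>
        exact Finset.prod_nonneg fun j _ => by
          by_cases hij : i < j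
          · simpa [hij] using hQ0 i j hij _
          · simp [hij]
    · intro i _
      rw [← Finset.prod_mul_distrib, ← Finset.prod_mul_distrib]
      apply Finset.prod_le_prod
      · intro j _
        by_cases hij : i < j
        · simpa [hij] using mul_nonneg (hQ0 i j hij _) (hQ0 i j hij _)
        · simp [hij]
      · intro j _
        by_cases hij : i < j
        · simp only [hij, if_true]
          apply core (Q i j) (hQ0 i j hij) (hQI i j hij)
          · have h1 := hsum i; have h2 := hsum j; omega
          · have h1 := hbetween i; have h2 := hbetween j
            simp only [hu] at *
            omega
          · have h1 := hbetween i; have h2 := hbetween j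
            simp only [hu] at *
            omega
        · simp [hij]
  have hvpart : (∏ j : Fin n, v j (p j)) * (∏ j : Fin n, v j (q j)) ≤
      (∏ j : Fin n, v j (u j)) * (∏ j : Fin n, v j (x j)) := by
    rw [← Finset.prod_mul_distrib, ← Finset.prod_mul_distrib]
    apply Finset.prod_le_prod
    · intro j _
      exact mul_nonneg (hv0 j _) (hv0 j _)
    · intro j _
      apply core (v j) (hv0 j) (hvI j)
      · exact (hsum j).symm ▸ by omega
      · have h1 := hbetween j; omega
      · have h1 := hbetween j; omega
  calc (∏ i : Fin n, ∏ j : Fin n, if i < j then Q i j (p j - p i) else 1) * (∏ j : Fin n, v j (p j)) *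
        ((∏ i : Fin n, ∏ j : Fin n, if i < j then Q i j (q j - q i) else 1) * ∏ j : Fin n, v j (q j))
      = ((∏ i : Fin n, ∏ j : Fin n, if i < j then Q i j (p j - p i) else 1) *
        (∏ i : Fin n, ∏ j : Fin n, if i < j then Q i j (q j - q i) else 1)) *
        ((∏ j : Fin n, v j (p j)) * (∏ j : Fin n, v j (q j))) := by ring
    _ ≤ ((∏ i : Fin n, ∏ j : Fin n, if i < j then Q i j (u j - u i) else 1) *
        (∏ i : Fin n, ∏ j : Fin n, if i < j then Q i j (x j - x i) else 1)) *
        ((∏ j : Fin n, v j (u j)) * (∏ j : Fin n, v j (x j))) := by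
        have hQn : ∀ h : Fin n → ℤ,
            0 ≤ ∏ i : Fin n, ∏ j : Fin n, if i < j then Q i j (h j - h i) else 1 := by
          intro h
          apply Finset.prod_nonneg
          intro i _
          apply Finset.prod_nonneg
          intro j _
          by_cases hij : i < j
          · simpa [hij] using hQ0 i j hij _
          · simp [hij]
        have hvn : ∀ h : Fin n → ℤ, 0 ≤ ∏ j : Fin n, v j (h j) :=
          fun h => Finset.prod_nonneg fun j _ => hv0 j _
        exact mul_le_mul hQpart hvpart (mul_nonneg (hvn p) (hvn q))
          (mul_nonneg (hQn u) (hQn x))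
    _ = (∏ i : Fin n, ∏ j : Fin n, if i < j then Q i j (u j - u i) else 1) * (∏ j : Fin n, v j (u j)) *
        ((∏ i : Fin n, ∏ j : Fin n, if i < j then Q i j (x j - x i) else 1) * ∏ j : Fin n, v j (x j)) := by ring



open Filter Topology

lemma tsum_four {α : Type*} [DistribLattice α] [DecidableEq α]
    (f₁ f₂ f₃ f₄ : α → ℝ) (h₁ : ∀ a, 0 ≤ f₁ a) (h₂ : ∀ a, 0 ≤ f₂ a)
    (h₃ : ∀ a, 0 ≤ f₃ a) (h₄ : ∀ a, 0 ≤ f₄ a)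
    (hs₁ : Summable f₁) (hs₂ : Summable f₂) (hs₃ : Summable f₃) (hs₄ : Summable f₄)
    (h : ∀ a b, f₁ a * f₂ b ≤ f₃ (a ⊓ b) * f₄ (a ⊔ b)) :
    (∑' a, f₁ a) * ∑' a, f₂ a ≤ (∑' a, f₃ a) * ∑' a, f₄ a := by
  have key : ∀ s : Finset α, (∑ a ∈ s, f₁ a) * (∑ a ∈ s, f₂ a) ≤ (∑' a, f₃ a) * ∑' a, f₄ a := by
    intro s
    refine (four_functions_theorem f₁ f₂ f₃ f₄ h₁ h₂ h₃ h₄ h s s).trans ?_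
    apply mul_le_mul (Summable.sum_le_tsum _ (fun a _ => h₃ a) hs₃) (Summable.sum_le_tsum _ (fun a _ => h₄ a) hs₄)
      (Finset.sum_nonneg fun a _ => h₄ a) (tsum_nonneg h₃)
  have t1 : Tendsto (fun s : Finset α => (∑ a ∈ s, f₁ a) * (∑ a ∈ s, f₂ a)) atTop
      (𝓝 ((∑' a, f₁ a) * ∑' a, f₂ a)) := Filter.Tendsto.mul hs₁.hasSum hs₂.hasSum
  exact le_of_tendsto t1 (Filter.Eventually.of_forall key)

section SM
variable {n : ℕ}

lemma sm_max {p q : Fin n → ℤ} (hp : StrictMono p) (hq : StrictMono q) (α : ℤ) :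
    StrictMono (fun a => max (p a - α) (q a)) := by
  intro a b hab
  simp only []
  have h1 : p a - α < p b - α := by have := hp hab; omega
  have h2 : q a < q b := hq hab
  omega

lemma sm_min {p q : Fin n → ℤ} (hp : StrictMono p) (hq : StrictMono q) (α : ℤ) :
    StrictMono (fun a => min (p a) (q a + α)) := by
  intro a b hab
  simp only []
  have h1 : p a < p b := hp hab
  have h2 : q a < q b := hq hab
  omega

lemma sm_sup {p q : Fin n → ℤ} (hp : StrictMono p) (hq : StrictMono q) :
    StrictMono (p ⊔ q) := by
  intro a b hab
  simp only [Pi.sup_apply]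
  have h1 : p a < p b := hp hab
  have h2 : q a < q b := hq hab
  exact max_lt (h1.trans_le (le_max_left _ _)) (h2.trans_le (le_max_right _ _))

lemma sm_inf {p q : Fin n → ℤ} (hp : StrictMono p) (hq : StrictMono q) :
    StrictMono (p ⊓ q) := by
  intro a b hab
  simp only [Pi.inf_apply]
  have h1 : p a < p b := hp hab
  have h2 : q a < q b := hq hab
  exact lt_min ((min_le_left _ _).trans_lt h1) ((min_le_right _ _).trans_lt h2)

lemma sm_add_const {p : Fin n → ℤ} (c : ℤ) (hp : StrictMono p) :
    StrictMono (fun a => p a + c) := fun a b hab => by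
  simp only []
  have := hp hab; omega

end SM

set_option maxHeartbeats 1000000 in
/-- If the interactions `Q_{i,j}` (for `i < j`) are nonnegative log-concave sequences
on ℤ and the weights `w_j` are ultra-log-concave sequences on ℕ (extended by `0` to
the negative integers), i.e. `k ↦ k! · w_j(k)` is log-concave with no internal zeros,
and the ensemble `P_{n,w,Q}` is well defined, then the pmf of each coordinate `h_i`
is an ultra-log-concave sequence on ℕ. -/
theorem ultraLogConcave_marginal_discrete_ensemble
    (n : ℕ) (hn : 1 ≤ n) (w : Fin n → ℤ → ℝ) (Q : Fin n → Fin n → ℤ → ℝ)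
    (hw0 : ∀ j k, 0 ≤ w j k)
    (hwneg : ∀ (j : Fin n) (k : ℤ), k < 0 → w j k = 0)
    (hQ0 : ∀ i j : Fin n, i < j → ∀ k, 0 ≤ Q i j k)
    (hwulc : ∀ (j : Fin n) (k : ℕ),
      ((Nat.factorial k : ℝ) * w j (k : ℤ)) *
        ((Nat.factorial (k + 2) : ℝ) * w j ((k : ℤ) + 2)) ≤
      ((Nat.factorial (k + 1) : ℝ) * w j ((k : ℤ) + 1)) ^ 2)
    (hwsupp : ∀ (j : Fin n) (k₁ k₂ k₃ : ℕ), k₁ ≤ k₂ → k₂ ≤ k₃ →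
      0 < w j (k₁ : ℤ) → 0 < w j (k₃ : ℤ) → 0 < w j (k₂ : ℤ))
    (hQlc : ∀ i j : Fin n, i < j → ∀ k : ℤ,
      Q i j (k - 1) * Q i j (k + 1) ≤ (Q i j k) ^ 2)
    (hQsupp : ∀ i j : Fin n, i < j → ∀ k₁ k₂ k₃ : ℤ, k₁ ≤ k₂ → k₂ ≤ k₃ →
      0 < Q i j k₁ → 0 < Q i j k₃ → 0 < Q i j k₂)
    (hsum : Summable (fun h : {h : Fin n → ℤ // StrictMono h} => ensembleWeight n w Q h.1))
    (hZ : 0 < ∑' h : {h : Fin n → ℤ // StrictMono h}, ensembleWeight n w Q h.1) :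
    ∀ i : Fin n,
      (∀ k : ℕ,
        ((Nat.factorial k : ℝ) * ensembleProb n w Q i (k : ℤ)) *
          ((Nat.factorial (k + 2) : ℝ) * ensembleProb n w Q i ((k : ℤ) + 2)) ≤
        ((Nat.factorial (k + 1) : ℝ) * ensembleProb n w Q i ((k : ℤ) + 1)) ^ 2) ∧
      (∀ k₁ k₂ k₃ : ℕ, k₁ ≤ k₂ → k₂ ≤ k₃ →
        0 < ensembleProb n w Q i (k₁ : ℤ) → 0 < ensembleProb n w Q i (k₃ : ℤ) →
        0 < ensembleProb n w Q i (k₂ : ℤ)) := by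
  intro i
  have hW0 : ∀ h, 0 ≤ ensembleWeight n w Q h := fun h => ensembleWeight_nonneg n w Q hw0 hQ0 h
  set Z : ℝ := ∑' h : {h : Fin n → ℤ // StrictMono h}, ensembleWeight n w Q h.1 with hZdef
  set S : ℤ → Set (Fin n → ℤ) := fun κ => {h | StrictMono h ∧ h i = κ} with hSdef
  set N : ℤ → ℝ := fun κ =>
    ∑' h : {h : Fin n → ℤ // StrictMono h ∧ h i = κ}, ensembleWeight n w Q h.1 with hNdef
  have hprob : ∀ κ, ensembleProb n w Q i κ = N κ / Z := fun κ => rfl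
  have hindnn : ∀ (s : Set (Fin n → ℤ)) (f : (Fin n → ℤ) → ℝ), (∀ x, 0 ≤ f x) →
      ∀ x, 0 ≤ s.indicator f x :=
    fun s f hf x => Set.indicator_nonneg (fun y _ => hf y) x
  have hsumInd : Summable ({h : Fin n → ℤ | StrictMono h}.indicator (ensembleWeight n w Q)) :=
    summable_subtype_iff_indicator.mp hsum
  have hsliceInd : ∀ κ, Summable ((S κ).indicator (ensembleWeight n w Q)) := by
    intro κ
    apply Summable.of_nonneg_of_le (hindnn _ _ hW0)
      (fun x => Set.indicator_le_indicator_of_subset (fun y hy => hy.1) hW0 x) hsumInd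
  have hslice : ∀ κ, Summable
      (fun h : {h : Fin n → ℤ // StrictMono h ∧ h i = κ} => ensembleWeight n w Q h.1) :=
    fun κ => (summable_subtype_iff_indicator (s := S κ)
      (f := ensembleWeight n w Q)).mpr (hsliceInd κ)
  have hN_ind : ∀ κ, N κ = ∑' x, (S κ).indicator (ensembleWeight n w Q) x :=
    fun κ => tsum_subtype (S κ) (ensembleWeight n w Q)
  have hNnn : ∀ κ, 0 ≤ N κ := fun κ => by
    rw [hN_ind]; exact tsum_nonneg (hindnn _ _ hW0)
  have hwI : ∀ j : Fin n, ∀ s t u x : ℤ, s ≤ u → u ≤ t → s + t = u + x →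
      w j s * w j t ≤ w j u * w j x :=
    fun j => lc_interval (w j) (hw0 j) (w_lc_int (w j) (hw0 j) (hwneg j) (hwulc j))
      (w_supp_int (w j) (hwneg j) (hwsupp j))
  have hQI : ∀ i' j' : Fin n, i' < j' → ∀ s t u x : ℤ, s ≤ u → u ≤ t → s + t = u + x →
      Q i' j' s * Q i' j' t ≤ Q i' j' u * Q i' j' x :=
    fun i' j' hij => lc_interval (Q i' j') (hQ0 i' j' hij) (hQlc i' j' hij)
      (fun s u t h1 h2 => hQsupp i' j' hij s u t h1 h2)
  -- the weight with the i-th factor removed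
  set wt : Fin n → ℤ → ℝ := fun j => if j = i then (fun _ => (1:ℝ)) else w j with hwtdef
  have hwt0 : ∀ j k, 0 ≤ wt j k := by
    intro j k
    by_cases hj : j = i
    · simp [hwtdef, hj]
    · simp only [hwtdef, if_neg hj]; exact hw0 j k
  have hW'0 : ∀ h, 0 ≤ ensembleWeight n wt Q h := ensembleWeight_nonneg n wt Q hwt0 hQ0
  have hwtI : ∀ j : Fin n, ∀ s t u x : ℤ, s ≤ u → u ≤ t → s + t = u + x →
      wt j s * wt j t ≤ wt j u * wt j x := by
    intro j s t u x h1 h2 h3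
    by_cases hj : j = i
    · simp [hwtdef, hj]
    · simp only [hwtdef, if_neg hj]; exact hwI j s t u x h1 h2 h3
  have F1 : ∀ h : Fin n → ℤ, ensembleWeight n w Q h = w i (h i) * ensembleWeight n wt Q h := by
    intro h
    unfold ensembleWeight
    rw [← Finset.mul_prod_erase Finset.univ (fun j => w j (h j)) (Finset.mem_univ i),
        ← Finset.mul_prod_erase Finset.univ (fun j => wt j (h j)) (Finset.mem_univ i)]
    have e1 : wt i (h i) = 1 := by simp [hwtdef]
    have e2 : ∏ j ∈ Finset.univ.erase i, wt j (h j) = ∏ j ∈ Finset.univ.erase i, w j (h j) :=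
      Finset.prod_congr rfl fun j hj => by simp [hwtdef, Finset.ne_of_mem_erase hj]
    rw [e1, e2]; ring
  have hNzero : ∀ κ, w i κ = 0 → N κ = 0 := by
    intro κ hκ
    have hz : ∀ h : {h : Fin n → ℤ // StrictMono h ∧ h i = κ},
        ensembleWeight n w Q h.1 = 0 := by
      intro h
      rw [F1 h.1, h.2.2, hκ, zero_mul]
    calc N κ = ∑' h : {h : Fin n → ℤ // StrictMono h ∧ h i = κ}, (0:ℝ) := tsum_congr hz
      _ = 0 := tsum_zero
  constructor
  · -- ultra-log-concavity
    intro k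
    rw [hprob, hprob, hprob]
    rcases eq_or_lt_of_le (hw0 i (k : ℤ)) with hk0 | hk0
    · rw [hNzero _ hk0.symm]
      have h2 : (0:ℝ) ≤ ((Nat.factorial (k + 1) : ℝ) * (N ((k:ℤ) + 1) / Z)) ^ 2 := sq_nonneg _
      simpa using h2
    rcases eq_or_lt_of_le (hw0 i ((k : ℤ) + 2)) with hk2 | hk2
    · rw [hNzero _ hk2.symm]
      have h2 : (0:ℝ) ≤ ((Nat.factorial (k + 1) : ℝ) * (N ((k:ℤ) + 1) / Z)) ^ 2 := sq_nonneg _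
      simpa using h2
    have hk1 : 0 < w i ((k : ℤ) + 1) := by
      have h1 : 0 < w i (((k : ℕ) : ℤ)) := hk0
      have h3 : 0 < w i (((k + 2 : ℕ) : ℤ)) := by push_cast; exact hk2
      have := hwsupp i k (k + 1) (k + 2) (by omega) (by omega) h1 h3
      push_cast at this; exact this
    -- G and its properties
    have hindW_eq : ∀ κ, (S κ).indicator (ensembleWeight n w Q) =
        fun y => w i κ * (S κ).indicator (ensembleWeight n wt Q) y := by
      intro κ; funext y
      by_cases hy : y ∈ S κ
      · rw [Set.indicator_of_mem hy, Set.indicator_of_mem hy, F1 y, hy.2]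
      · rw [Set.indicator_of_notMem hy, Set.indicator_of_notMem hy, mul_zero]
    set G : ℤ → ℝ := fun κ => ∑' y, (S κ).indicator (ensembleWeight n wt Q) y with hGdef
    have hGnn : ∀ κ, 0 ≤ G κ := fun κ => tsum_nonneg (hindnn _ _ hW'0)
    have hNG : ∀ κ, N κ = w i κ * G κ := by
      intro κ
      rw [hN_ind, hindW_eq κ]
      exact tsum_mul_left
    have hsliceW' : ∀ κ, 0 < w i κ → Summable ((S κ).indicator (ensembleWeight n wt Q)) := by
      intro κ hκ
      have h1 : Summable ((S κ).indicator (ensembleWeight n w Q)) := hsliceInd κ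
      rw [hindW_eq κ] at h1
      exact (summable_mul_left_iff (ne_of_gt hκ)).mp h1
    set c : Fin n → ℤ := (fun _ => 1) with hcdef
    have hSMshift : ∀ y : Fin n → ℤ, StrictMono (y + c) ↔ StrictMono y := by
      intro y
      constructor
      · intro hsm a b hab
        have := hsm hab
        simp only [Pi.add_apply, hcdef] at this
        omega
      · intro hsm a b hab
        have := hsm hab
        simp only [Pi.add_apply, hcdef]
        omega
    have hmemshift : ∀ (κ : ℤ) (y : Fin n → ℤ), y + c ∈ S (κ + 1) ↔ y ∈ S κ := by
      intro κ y
      constructor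
      · rintro ⟨h1, h2⟩
        refine ⟨(hSMshift y).mp h1, ?_⟩
        simp only [Pi.add_apply, hcdef] at h2
        omega
      · rintro ⟨h1, h2⟩
        refine ⟨(hSMshift y).mpr h1, ?_⟩
        simp only [Pi.add_apply, hcdef]
        omega
    have hshift_eq : ∀ κ : ℤ, (S κ).indicator (fun y => ensembleWeight n wt Q (y + c)) =
        fun y => (S (κ + 1)).indicator (ensembleWeight n wt Q) (y + c) := by
      intro κ; funext y
      by_cases hy : y ∈ S κ
      · rw [Set.indicator_of_mem hy, Set.indicator_of_mem ((hmemshift κ y).mpr hy)]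
      · rw [Set.indicator_of_notMem hy,
          Set.indicator_of_notMem (fun hcon => hy ((hmemshift κ y).mp hcon))]
    have hshift_tsum : ∀ κ : ℤ,
        ∑' y, (S κ).indicator (fun z => ensembleWeight n wt Q (z + c)) y = G (κ + 1) := by
      intro κ
      rw [hshift_eq κ]
      exact (Equiv.addRight c).tsum_eq ((S (κ + 1)).indicator (ensembleWeight n wt Q))
    have hshift_summ : ∀ κ : ℤ, Summable ((S (κ + 1)).indicator (ensembleWeight n wt Q)) →
        Summable ((S κ).indicator (fun z => ensembleWeight n wt Q (z + c))) := by
      intro κ hs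
      rw [hshift_eq κ]
      exact (Equiv.addRight c).summable_iff.mpr hs
    -- four functions
    set κ₀ : ℤ := (k : ℤ) with hκ₀
    have e21 : κ₀ + 1 + 1 = κ₀ + 2 := by ring
    have cond : ∀ a b : Fin n → ℤ,
        (S (κ₀ + 1)).indicator (fun y => ensembleWeight n wt Q (y + c)) a *
          (S κ₀).indicator (ensembleWeight n wt Q) b ≤
        (S κ₀).indicator (fun y => ensembleWeight n wt Q (y + c)) (a ⊓ b) *
          (S (κ₀ + 1)).indicator (ensembleWeight n wt Q) (a ⊔ b) := by
      intro a b
      by_cases ha : a ∈ S (κ₀ + 1)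
      · by_cases hb : b ∈ S κ₀
        · have hab_inf : a ⊓ b ∈ S κ₀ := by
            refine ⟨sm_inf ha.1 hb.1, ?_⟩
            have h1 := ha.2
            have h2 := hb.2
            simp only [Pi.inf_apply]
            omega
          have hab_sup : a ⊔ b ∈ S (κ₀ + 1) := by
            refine ⟨sm_sup ha.1 hb.1, ?_⟩
            have h1 := ha.2
            have h2 := hb.2
            simp only [Pi.sup_apply]
            omega
          rw [Set.indicator_of_mem ha, Set.indicator_of_mem hb,
            Set.indicator_of_mem hab_inf, Set.indicator_of_mem hab_sup]
          have hre := weight_rearrange n wt Q hwt0 hQ0 hwtI hQI (a + c) b 1 (by norm_num)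
          have e1 : (fun t => max ((a + c) t - 1) (b t)) = a ⊔ b := by
            funext t
            simp only [Pi.add_apply, Pi.sup_apply, hcdef]
            omega
          have e2 : (fun t => min ((a + c) t) (b t + 1)) = (a ⊓ b) + c := by
            funext t
            simp only [Pi.add_apply, Pi.inf_apply, hcdef]
            omega
          rw [e1, e2] at hre
          calc ensembleWeight n wt Q (a + c) * ensembleWeight n wt Q b
              ≤ ensembleWeight n wt Q (a ⊔ b) * ensembleWeight n wt Q ((a ⊓ b) + c) := hre
            _ = ensembleWeight n wt Q ((a ⊓ b) + c) * ensembleWeight n wt Q (a ⊔ b) :=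
                mul_comm _ _
        · rw [Set.indicator_of_notMem hb, mul_zero]
          exact mul_nonneg (hindnn _ _ (fun y => hW'0 (y + c)) _) (hindnn _ _ hW'0 _)
      · rw [Set.indicator_of_notMem ha, zero_mul]
        exact mul_nonneg (hindnn _ _ (fun y => hW'0 (y + c)) _) (hindnn _ _ hW'0 _)
    have hs₂ : Summable ((S κ₀).indicator (ensembleWeight n wt Q)) := hsliceW' κ₀ hk0
    have hs₄ : Summable ((S (κ₀ + 1)).indicator (ensembleWeight n wt Q)) := hsliceW' _ hk1
    have hs₃ : Summable ((S κ₀).indicator (fun z => ensembleWeight n wt Q (z + c))) :=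
      hshift_summ κ₀ hs₄
    have hs₁ : Summable ((S (κ₀ + 1)).indicator (fun z => ensembleWeight n wt Q (z + c))) := by
      apply hshift_summ (κ₀ + 1)
      rw [e21]
      exact hsliceW' _ hk2
    have AD := tsum_four _ _ _ _
      (hindnn _ _ (fun y => hW'0 (y + c))) (hindnn _ _ hW'0)
      (hindnn _ _ (fun y => hW'0 (y + c))) (hindnn _ _ hW'0)
      hs₁ hs₂ hs₃ hs₄ cond
    rw [hshift_tsum (κ₀ + 1), hshift_tsum κ₀, e21] at AD
    have hGsub : ∀ κ : ℤ, ∑' y, (S κ).indicator (ensembleWeight n wt Q) y = G κ := fun κ => rfl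
    rw [hGsub, hGsub] at AD
    -- AD : G (κ₀ + 2) * G κ₀ ≤ G (κ₀ + 1) * G (κ₀ + 1)
    have key : ((Nat.factorial k : ℝ) * N κ₀) * ((Nat.factorial (k + 2) : ℝ) * N (κ₀ + 2)) ≤
        ((Nat.factorial (k + 1) : ℝ) * N (κ₀ + 1)) ^ 2 := by
      rw [hNG κ₀, hNG (κ₀ + 1), hNG (κ₀ + 2)]
      have h1 := hwulc i k
      have h2 : G κ₀ * G (κ₀ + 2) ≤ G (κ₀ + 1) ^ 2 := by
        rw [sq]
        calc G κ₀ * G (κ₀ + 2) = G (κ₀ + 2) * G κ₀ := mul_comm _ _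
          _ ≤ G (κ₀ + 1) * G (κ₀ + 1) := AD
      have h3 : 0 ≤ G κ₀ * G (κ₀ + 2) := mul_nonneg (hGnn _) (hGnn _)
      have h4 : (0:ℝ) ≤ ((Nat.factorial (k + 1) : ℝ) * w i ((k:ℤ) + 1)) ^ 2 := sq_nonneg _
      have h5 : (0:ℝ) ≤ (Nat.factorial k : ℝ) * w i (k : ℤ) := by positivity
      have h6 := mul_le_mul h1 h2 h3 h4
      calc ((Nat.factorial k : ℝ) * (w i κ₀ * G κ₀)) *
            ((Nat.factorial (k + 2) : ℝ) * (w i (κ₀ + 2) * G (κ₀ + 2)))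
          = (((Nat.factorial k : ℝ) * w i κ₀) * ((Nat.factorial (k + 2) : ℝ) * w i (κ₀ + 2))) *
            (G κ₀ * G (κ₀ + 2)) := by ring
        _ ≤ ((Nat.factorial (k + 1) : ℝ) * w i ((k:ℤ) + 1)) ^ 2 * G (κ₀ + 1) ^ 2 := h6
        _ = ((Nat.factorial (k + 1) : ℝ) * (w i (κ₀ + 1) * G (κ₀ + 1))) ^ 2 := by
            rw [hκ₀]; ring
    have hZ2 : (0:ℝ) < Z ^ 2 := by positivity
    calc ((Nat.factorial k : ℝ) * (N κ₀ / Z)) * ((Nat.factorial (k + 2) : ℝ) * (N (κ₀ + 2) / Z))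
        = (((Nat.factorial k : ℝ) * N κ₀) * ((Nat.factorial (k + 2) : ℝ) * N (κ₀ + 2))) / Z ^ 2 := by
          ring
      _ ≤ (((Nat.factorial (k + 1) : ℝ) * N (κ₀ + 1)) ^ 2) / Z ^ 2 :=
          (div_le_div_iff_of_pos_right hZ2).mpr key
      _ = ((Nat.factorial (k + 1) : ℝ) * (N (κ₀ + 1) / Z)) ^ 2 := by ring
  · -- support is an interval
    intro k₁ k₂ k₃ h12 h23 hp1 hp3
    rw [hprob] at hp1 hp3 ⊢
    have hN1 : 0 < N (k₁ : ℤ) := by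
      have h := mul_pos hp1 hZ
      rwa [div_mul_cancel₀ _ (ne_of_gt hZ)] at h
    have hN3 : 0 < N (k₃ : ℤ) := by
      have h := mul_pos hp3 hZ
      rwa [div_mul_cancel₀ _ (ne_of_gt hZ)] at h
    obtain ⟨a, ha⟩ : ∃ a : {h : Fin n → ℤ // StrictMono h ∧ h i = (k₁ : ℤ)},
        ensembleWeight n w Q a.1 ≠ 0 := by
      by_contra hc
      push_neg at hc
      have : N (k₁ : ℤ) = 0 := by
        calc N (k₁ : ℤ) = ∑' h : {h : Fin n → ℤ // StrictMono h ∧ h i = (k₁ : ℤ)}, (0:ℝ) :=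
              tsum_congr hc
          _ = 0 := tsum_zero
      linarith
    obtain ⟨b, hb⟩ : ∃ b : {h : Fin n → ℤ // StrictMono h ∧ h i = (k₃ : ℤ)},
        ensembleWeight n w Q b.1 ≠ 0 := by
      by_contra hc
      push_neg at hc
      have : N (k₃ : ℤ) = 0 := by
        calc N (k₃ : ℤ) = ∑' h : {h : Fin n → ℤ // StrictMono h ∧ h i = (k₃ : ℤ)}, (0:ℝ) :=
              tsum_congr hc
          _ = 0 := tsum_zero
      linarith
    have hWa : 0 < ensembleWeight n w Q a.1 := lt_of_le_of_ne (hW0 _) (Ne.symm ha)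
    have hWb : 0 < ensembleWeight n w Q b.1 := lt_of_le_of_ne (hW0 _) (Ne.symm hb)
    set α : ℤ := (k₃ : ℤ) - (k₂ : ℤ) with hαdef
    have hα0 : 0 ≤ α := by
      rw [hαdef]
      have : (k₂ : ℤ) ≤ (k₃ : ℤ) := by exact_mod_cast h23
      omega
    have hre := weight_rearrange n w Q hw0 hQ0 hwI hQI b.1 a.1 α hα0
    set u : Fin n → ℤ := fun t => max (b.1 t - α) (a.1 t) with hudef
    set x : Fin n → ℤ := fun t => min (b.1 t) (a.1 t + α) with hxdef
    have hprod : 0 < ensembleWeight n w Q u * ensembleWeight n w Q x :=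
      lt_of_lt_of_le (mul_pos hWb hWa) hre
    have hWu : 0 < ensembleWeight n w Q u := by
      rcases eq_or_lt_of_le (hW0 u) with h | h
      · rw [← h, zero_mul] at hprod
        exact absurd hprod (lt_irrefl 0)
      · exact h
    have hSMu : StrictMono u := sm_max b.2.1 a.2.1 α
    have hui : u i = (k₂ : ℤ) := by
      have h1 : b.1 i = (k₃ : ℤ) := b.2.2
      have h2 : a.1 i = (k₁ : ℤ) := a.2.2
      have h3 : (k₁ : ℤ) ≤ (k₂ : ℤ) := by exact_mod_cast h12
      simp only [hudef, h1, h2, hαdef]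
      omega
    have hle : ensembleWeight n w Q u ≤ N (k₂ : ℤ) :=
      Summable.le_tsum (hslice (k₂ : ℤ)) ⟨u, hSMu, hui⟩ (fun j _ => hW0 j.1)
    exact div_pos (lt_of_lt_of_le hWu hle) hZ
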